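/- With L as above and the basis φ₂ₙ(x) = (x-r₁+1/2)ₙ(-x-r₁+1/2)ₙ, φ₂ₙ₊₁(x) = (x-r₁+1/2)ₙ₊₁(-x-r₁+1/2)ₙ (Pochhammer symbols), the operator L is two-diagonal: L φₙ = λₙ φₙ + νₙ φₙ₋₁, where λₙ is as in the previous statement, νₙ = (n/2)(r₁+r₂-n/2) for even n, and νₙ = (ρ₁-r₁+n/2)(ρ₂-r₁+n/2) for odd n. -/

import Mathlib

noncomputable def biF (ρ₁ ρ₂ x : ℝ) : ℝ := (x - ρ₁) * (x - ρ₂) / (2 * x)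

noncomputable def biG (r₁ r₂ x : ℝ) : ℝ := (x - r₁ + 1/2) * (x - r₂ + 1/2) / (2 * x + 1)

noncomputable def biL (r₁ r₂ ρ₁ ρ₂ : ℝ) (f : ℝ → ℝ) (x : ℝ) : ℝ :=
  biF ρ₁ ρ₂ x * (f x - f (-x)) + biG r₁ r₂ x * (f (-x - 1) - f x)

noncomputable def biLam (r₁ r₂ ρ₁ ρ₂ : ℝ) (n : ℕ) : ℝ :=
  if Even n then (n : ℝ) / 2 else r₁ + r₂ - ρ₁ - ρ₂ - ((n : ℝ) + 1) / 2

/-- The shifted factorial (Pochhammer symbol) (a)ₙ = a(a+1)⋯(a+n-1). -/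
noncomputable def poch (a : ℝ) (n : ℕ) : ℝ := ∏ i ∈ Finset.range n, (a + i)

/-- The two-diagonal basis: φ₂ₙ = (x-r₁+1/2)ₙ(-x-r₁+1/2)ₙ,
φ₂ₙ₊₁ = (x-r₁+1/2)ₙ₊₁(-x-r₁+1/2)ₙ. -/
noncomputable def biPhi (r₁ : ℝ) (n : ℕ) (x : ℝ) : ℝ :=
  if Even n then poch (x - r₁ + 1/2) (n / 2) * poch (-x - r₁ + 1/2) (n / 2)
  else poch (x - r₁ + 1/2) (n / 2 + 1) * poch (-x - r₁ + 1/2) (n / 2)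

noncomputable def biNu (r₁ r₂ ρ₁ ρ₂ : ℝ) (n : ℕ) : ℝ :=
  if Even n then ((n : ℝ) / 2) * (r₁ + r₂ - (n : ℝ) / 2)
  else (ρ₁ - r₁ + (n : ℝ) / 2) * (ρ₂ - r₁ + (n : ℝ) / 2)

lemma poch_succ (a : ℝ) (k : ℕ) : poch a (k+1) = poch a k * (a + k) := by
  simp [poch, Finset.prod_range_succ]

lemma poch_shift (a : ℝ) (k : ℕ) : poch a (k+1) = a * poch (a+1) k := by
  rw [poch, Finset.prod_range_succ', mul_comm]
  congr 1
  · norm_num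
  · rw [poch]
    exact Finset.prod_congr rfl fun i _ => by push_cast; ring


/-- The operator L is lower two-diagonal in the basis φₙ:
L φₙ = λₙ φₙ + νₙ φₙ₋₁. -/
theorem stmt1 (r₁ r₂ ρ₁ ρ₂ : ℝ) :
    ∀ n : ℕ, 1 ≤ n → ∀ x : ℝ, x ≠ 0 → 2 * x + 1 ≠ 0 →
      biL r₁ r₂ ρ₁ ρ₂ (biPhi r₁ n) x =
        biLam r₁ r₂ ρ₁ ρ₂ n * biPhi r₁ n x
          + biNu r₁ r₂ ρ₁ ρ₂ n * biPhi r₁ (n - 1) x := by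
  intro n hn x hx h2x
  rcases n.even_or_odd with he | ho
  · obtain ⟨m, rfl⟩ := he
    obtain ⟨k, rfl⟩ : ∃ k, m = k + 1 := ⟨m - 1, by omega⟩
    have e1 : Even (k + 1 + (k + 1)) := ⟨k+1, rfl⟩
    have e2 : ¬ Even (k + 1 + (k + 1) - 1) := by simp [Nat.even_sub]
    have d1 : (k + 1 + (k + 1)) / 2 = k + 1 := by omega
    have d2 : (k + 1 + (k + 1) - 1) / 2 = k := by omega
    simp only [biL, biPhi, biLam, biNu, if_pos e1, if_neg e2, d1, d2]
    rw [show (-(-x) - r₁ + 1/2 : ℝ) = x - r₁ + 1/2 by ring,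
        show (-x - 1 - r₁ + 1/2 : ℝ) = (-x - r₁ + 1/2) - 1 by ring,
        show (-(-x - 1) - r₁ + 1/2 : ℝ) = (x - r₁ + 1/2) + 1 by ring]
    rw [poch_shift (x - r₁ + 1/2) k, poch_succ (-x - r₁ + 1/2) k,
        poch_shift ((-x - r₁ + 1/2) - 1) k, poch_succ ((x - r₁ + 1/2) + 1) k,
        show ((-x - r₁ + 1/2) - 1 + 1 : ℝ) = -x - r₁ + 1/2 by ring]
    rw [biF, biG]
    push_cast
    have h2x' : x * 2 + 1 ≠ 0 := by rwa [mul_comm]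
    field_simp
    ring
  · obtain ⟨m, rfl⟩ := ho
    rcases Nat.eq_zero_or_pos m with rfl | hm
    · norm_num [biL, biPhi, biLam, biNu, poch, biF, biG]
      have h2x' : x * 2 + 1 ≠ 0 := by rwa [mul_comm]
      field_simp
      ring
    · obtain ⟨k, rfl⟩ : ∃ k, m = k + 1 := ⟨m - 1, by omega⟩
      have e1 : ¬ Even (2 * (k + 1) + 1) := by simp [Nat.even_add_one, parity_simps]
      have e2 : Even (2 * (k + 1) + 1 - 1) := by simp [parity_simps]
      have d1 : (2 * (k + 1) + 1) / 2 = k + 1 := by omega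
      have d2 : (2 * (k + 1) + 1 - 1) / 2 = k + 1 := by omega
      simp only [biL, biPhi, biLam, biNu, if_neg e1, if_pos e2, d1, d2]
      rw [show (-(-x) - r₁ + 1/2 : ℝ) = x - r₁ + 1/2 by ring,
          show (-x - 1 - r₁ + 1/2 : ℝ) = (-x - r₁ + 1/2) - 1 by ring,
          show (-(-x - 1) - r₁ + 1/2 : ℝ) = (x - r₁ + 1/2) + 1 by ring]
      rw [poch_shift (x - r₁ + 1/2) (k+1), poch_shift (x - r₁ + 1/2) k,
          poch_succ (x - r₁ + 1/2 + 1) k,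
          poch_shift ((-x - r₁ + 1/2) - 1) (k+1),
          show ((-x - r₁ + 1/2) - 1 + 1 : ℝ) = -x - r₁ + 1/2 by ring,
          poch_succ (-x - r₁ + 1/2) (k+1), poch_succ (-x - r₁ + 1/2) k]
      rw [biF, biG]
      push_cast
      have h2x' : x * 2 + 1 ≠ 0 := by rwa [mul_comm]
      field_simp
      ring
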